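/- With continuations of directed edges as defined (via lowest/highest edges at shared endpoints), if (e₁, e₂, …, e_m) is a sequence where each e_{i+1} is the continuation of e_i, then for all i and j with j ≥ i+2 the bounding box R(e_j) satisfies x₁(R(e_i)) < x₁(R(e_j)) < x₂(R(e_j)) < x₂(R(e_i)) and y₁(R(e_j)) < y₁(R(e_i)) < y₂(R(e_i)) < y₂(R(e_j)); consequently e₁, e₃, e₅, … are pairwise crossing independent edges. -/

import Mathlib

/-- The bounding-box relation between a right edge and its continuation:
`x₁(R(e)) < x₁(R(f)) < x₂(R(f)) = x₂(R(e))` and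
`y₁(R(f)) < y₁(R(e)) < y₂(R(e)) = y₂(R(f))`, where edge `i` has bounding box with
lower-left corner `a i` and upper-right corner `b i`. -/
def BoxStepRight (a b : ℕ → ℝ × ℝ) (i : ℕ) : Prop :=
  (a i).1 < (a (i + 1)).1 ∧ (b (i + 1)).1 = (b i).1 ∧
  (a (i + 1)).2 < (a i).2 ∧ (b i).2 = (b (i + 1)).2

/-- The bounding-box relation between a left edge and its continuation. -/
def BoxStepLeft (a b : ℕ → ℝ × ℝ) (i : ℕ) : Prop :=
  (a i).1 = (a (i + 1)).1 ∧ (b (i + 1)).1 < (b i).1 ∧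
  (a (i + 1)).2 = (a i).2 ∧ (b i).2 < (b (i + 1)).2

/-- Let `e₀, …, e_{m-1}` be a continuation sequence of edges of positive slope, the
`i`-th edge being the segment from `a i` (lower-left corner of its bounding box) to
`b i` (upper-right corner), alternating between right and left edges so that each
consecutive pair satisfies the corresponding bounding-box relation.  Then for all
`i, j` with `j ≥ i + 2` the bounding boxes satisfy
`x₁(R(eᵢ)) < x₁(R(eⱼ)) < x₂(R(eⱼ)) < x₂(R(eᵢ))` and
`y₁(R(eⱼ)) < y₁(R(eᵢ)) < y₂(R(eᵢ)) < y₂(R(eⱼ))`; consequently such `eᵢ` and `eⱼ`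
(in particular `e₁, e₃, e₅, …`) are pairwise crossing independent edges. -/
lemma mem_seg (p q : ℝ × ℝ) (x : ℝ) (hx : x ∈ Set.Ioo p.1 q.1) :
    ((x, p.2 + (x - p.1) * ((q.2 - p.2) / (q.1 - p.1))) : ℝ × ℝ) ∈ openSegment ℝ p q := by
  rw [openSegment_eq_image']
  have hd : (0:ℝ) < q.1 - p.1 := by
    have := hx.1; have := hx.2; linarith
  refine ⟨(x - p.1) / (q.1 - p.1), ⟨div_pos (by have := hx.1; linarith) hd, by
    rw [div_lt_one hd]; have := hx.2; linarith⟩, ?_⟩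
  have hne : q.1 - p.1 ≠ 0 := ne_of_gt hd
  apply Prod.ext
  · show p.1 + (x - p.1) / (q.1 - p.1) * (q - p).1 = x
    simp only [Prod.fst_sub]
    field_simp; ring
  · show p.2 + (x - p.1) / (q.1 - p.1) * (q - p).2 = _
    simp only [Prod.snd_sub]
    ring

lemma cross (p q r s : ℝ × ℝ) (hpq2 : p.2 < q.2) (hrs2 : r.2 < s.2)
    (h1 : p.1 < r.1) (h2 : r.1 < s.1) (h3 : s.1 < q.1)
    (h4 : r.2 < p.2) (h5 : q.2 < s.2) :
    (openSegment ℝ p q ∩ openSegment ℝ r s).Nonempty := by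
  have hpq1 : p.1 < q.1 := by linarith
  set cp : ℝ := (q.2 - p.2) / (q.1 - p.1) with hcp
  set cr : ℝ := (s.2 - r.2) / (s.1 - r.1) with hcr
  have hcp0 : 0 < cp := by apply div_pos <;> linarith
  have hcr0 : 0 < cr := by apply div_pos <;> linarith
  set f : ℝ → ℝ := fun x => p.2 + (x - p.1) * cp with hf
  set g : ℝ → ℝ := fun x => r.2 + (x - r.1) * cr with hg
  set h : ℝ → ℝ := fun x => f x - g x with hh
  have hcont : ContinuousOn h (Set.Icc r.1 s.1) := by
    apply Continuous.continuousOn; fun_prop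
  have hfr : r.2 < f r.1 := by
    have : 0 < (r.1 - p.1) * cp := by
      apply mul_pos <;> [linarith; exact hcp0]
    simp only [hf]; nlinarith
  have hfs : f s.1 < s.2 := by
    have key : f q.1 = q.2 := by
      have hne : q.1 - p.1 ≠ 0 := by intro h; simp [h] at *; linarith
      simp only [hf, hcp]; field_simp; ring
    have hmono : f s.1 < f q.1 := by
      simp only [hf]
      have : (s.1 - p.1) * cp < (q.1 - p.1) * cp := by
        apply mul_lt_mul_of_pos_right _ hcp0; linarith
      linarith
    linarith [key ▸ hmono]
  have hhr : 0 < h r.1 := by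
    simp only [hh, hg]; simp; linarith
  have hhs : h s.1 < 0 := by
    have : g s.1 = s.2 := by
      have hne : s.1 - r.1 ≠ 0 := by intro h; nlinarith [h]
      simp only [hg, hcr]; field_simp; ring
    simp only [hh]; linarith
  have := intermediate_value_Ioo' (le_of_lt h2) hcont
    (Set.mem_Ioo.mpr ⟨hhs, hhr⟩ : (0:ℝ) ∈ Set.Ioo (h s.1) (h r.1))
  obtain ⟨x, hxmem, hx0⟩ := this
  have hxp : x ∈ Set.Ioo p.1 q.1 := ⟨by linarith [hxmem.1], by linarith [hxmem.2]⟩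
  refine ⟨(x, f x), ?_, ?_⟩
  · have := mem_seg p q x hxp
    simpa only [hf] using this
  · have hfg : f x = g x := by simp only [hh] at hx0; linarith
    have := mem_seg r s x hxmem
    rw [hfg]
    simpa only [hg] using this

theorem stmt17 (m : ℕ) (a b : ℕ → ℝ × ℝ)
    (hpos : ∀ i < m, (a i).1 < (b i).1 ∧ (a i).2 < (b i).2)
    (hstep :
      (∀ i, i + 1 < m → (Even i → BoxStepRight a b i) ∧ (Odd i → BoxStepLeft a b i)) ∨
      (∀ i, i + 1 < m → (Even i → BoxStepLeft a b i) ∧ (Odd i → BoxStepRight a b i))) :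
    ∀ i j, i + 2 ≤ j → j < m →
      ((a i).1 < (a j).1 ∧ (a j).1 < (b j).1 ∧ (b j).1 < (b i).1 ∧
        (a j).2 < (a i).2 ∧ (a i).2 < (b i).2 ∧ (b i).2 < (b j).2) ∧
      (openSegment ℝ (a i) (b i) ∩ openSegment ℝ (a j) (b j)).Nonempty ∧
      a i ≠ a j ∧ a i ≠ b j ∧ b i ≠ a j ∧ b i ≠ b j := by
  -- each step is either a right or a left box step
  have hRL : ∀ k, k + 1 < m → BoxStepRight a b k ∨ BoxStepLeft a b k := by
    intro k hk
    rcases hstep with hs | hs <;> rcases Nat.even_or_odd k with he | ho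
    · exact Or.inl ((hs k hk).1 he)
    · exact Or.inr ((hs k hk).2 ho)
    · exact Or.inr ((hs k hk).1 he)
    · exact Or.inl ((hs k hk).2 ho)
  -- consecutive steps alternate: one right, one left
  have hAlt : ∀ k, k + 2 < m →
      (BoxStepRight a b k ∧ BoxStepLeft a b (k + 1)) ∨
      (BoxStepLeft a b k ∧ BoxStepRight a b (k + 1)) := by
    intro k hk
    have hk1 : k + 1 < m := by omega
    have hk2 : k + 1 + 1 < m := by omega
    rcases Nat.even_or_odd k with he | ho
    · have ho1 : Odd (k + 1) := Even.add_one he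
      rcases hstep with hs | hs
      · exact Or.inl ⟨(hs k hk1).1 he, (hs (k+1) hk2).2 ho1⟩
      · exact Or.inr ⟨(hs k hk1).1 he, (hs (k+1) hk2).2 ho1⟩
    · have he1 : Even (k + 1) := Odd.add_one ho
      rcases hstep with hs | hs
      · exact Or.inr ⟨(hs k hk1).2 ho, (hs (k+1) hk2).1 he1⟩
      · exact Or.inl ⟨(hs k hk1).2 ho, (hs (k+1) hk2).1 he1⟩
  -- weak monotone nesting per step
  have hW : ∀ k, k + 1 < m →
      (a k).1 ≤ (a (k+1)).1 ∧ (b (k+1)).1 ≤ (b k).1 ∧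
      (a (k+1)).2 ≤ (a k).2 ∧ (b k).2 ≤ (b (k+1)).2 := by
    intro k hk
    rcases hRL k hk with ⟨h1, h2, h3, h4⟩ | ⟨h1, h2, h3, h4⟩
    · exact ⟨le_of_lt h1, le_of_eq h2, le_of_lt h3, le_of_eq h4⟩
    · exact ⟨le_of_eq h1, le_of_lt h2, le_of_eq h3, le_of_lt h4⟩
  -- strict nesting over two steps
  have hS2 : ∀ k, k + 2 < m →
      (a k).1 < (a (k+2)).1 ∧ (b (k+2)).1 < (b k).1 ∧
      (a k).2 > (a (k+2)).2 ∧ (b k).2 < (b (k+2)).2 := by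
    intro k hk
    have e : k + 1 + 1 = k + 2 := rfl
    rcases hAlt k hk with ⟨⟨r1, r2, r3, r4⟩, ⟨l1, l2, l3, l4⟩⟩ |
      ⟨⟨l1, l2, l3, l4⟩, ⟨r1, r2, r3, r4⟩⟩ <;>
      rw [e] at * <;>
      exact ⟨by linarith, by linarith, by linarith, by linarith⟩
  -- full strict nesting for j ≥ i + 2, by induction on j
  have hNest : ∀ i j, i + 2 ≤ j → j < m →
      (a i).1 < (a j).1 ∧ (b j).1 < (b i).1 ∧
      (a j).2 < (a i).2 ∧ (b i).2 < (b j).2 := by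
    intro i j hij
    induction j, hij using Nat.le_induction with
    | base => intro hm; exact ⟨(hS2 i hm).1, (hS2 i hm).2.1, (hS2 i hm).2.2.1, (hS2 i hm).2.2.2⟩
    | succ n hn ih =>
      intro hm
      have hnm : n < m := by omega
      obtain ⟨i1, i2, i3, i4⟩ := ih hnm
      obtain ⟨w1, w2, w3, w4⟩ := hW n (by omega)
      exact ⟨lt_of_lt_of_le i1 w1, lt_of_le_of_lt w2 i2,
        lt_of_le_of_lt w3 i3, lt_of_lt_of_le i4 w4⟩
  intro i j hij hjm
  have him : i < m := by omega
  obtain ⟨hi1, hi2⟩ := hpos i him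
  obtain ⟨hj1, hj2⟩ := hpos j hjm
  obtain ⟨n1, n2, n3, n4⟩ := hNest i j hij hjm
  refine ⟨⟨n1, hj1, n2, n3, hi2, n4⟩, ?_, ?_, ?_, ?_, ?_⟩
  · exact cross (a i) (b i) (a j) (b j) hi2 hj2 n1 hj1 n2 n3 n4
  · intro h; rw [h] at n1; exact lt_irrefl _ n1
  · intro h; have : (a i).2 < (b j).2 := by linarith
    rw [h] at this; exact lt_irrefl _ this
  · intro h; have : (a j).1 < (b i).1 := by linarith
    rw [← h] at this; exact lt_irrefl _ this
  · intro h; rw [h] at n4; exact lt_irrefl _ n4
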